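/- Let T be a self-adjoint contraction in M_{2^n} with |T| ≤ 1 and 1 ≤ p < 2. Then tr[-|T|² log(|T|²)] ≤ K_p ‖T‖₂ ‖T‖_p^{p/2}, where K_p = 4/((2-p)e). -/

import Mathlib

open scoped BigOperators ComplexOrder
open Matrix

noncomputable section

abbrev QM (n : ℕ) := Matrix (Fin n → Fin 2) (Fin n → Fin 2) ℂ

namespace QM

variable {n : ℕ}

/-- Normalized trace on `M_{2^n}`. -/
def qtr (T : QM n) : ℂ := Matrix.trace T / 2 ^ n

/-- Singular values of `T` (eigenvalues of `|T| = (TᴴT)^{1/2}`). -/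
def sv (T : QM n) (i : Fin n → Fin 2) : ℝ :=
  Real.sqrt ((Matrix.posSemidef_conjTranspose_mul_self T).1.eigenvalues i)

/-- Normalized Schatten `p`-norm: `(tr |T|^p)^{1/p}` with normalized trace. -/
def snorm (p : ℝ) (T : QM n) : ℝ :=
  ((∑ i, sv T i ^ p) / 2 ^ n) ^ (1 / p)

/-- Squared normalized `L₂`-norm: `tr(TᴴT)`. -/
def l2sq (T : QM n) : ℝ := (Matrix.trace (Tᴴ * T)).re / 2 ^ n

/-- Variance `‖T - tr(T)1‖₂²`. -/
def qvar (T : QM n) : ℝ := l2sq (T - qtr T • 1)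

/-- Operator norm. -/
def opnorm (T : QM n) : ℝ := ‖Matrix.toEuclideanCLM (𝕜 := ℂ) T‖

/-- The Pauli matrices. -/
def pauli : Fin 4 → Matrix (Fin 2) (Fin 2) ℂ
  | 0 => 1
  | 1 => !![1, 0; 0, -1]
  | 2 => !![0, 1; 1, 0]
  | 3 => !![0, Complex.I; -Complex.I, 0]

/-- The Pauli tensor basis `σ_s` for `s ∈ {0,1,2,3}^n`. -/
def sigma (s : Fin n → Fin 4) : QM n :=
  Matrix.of fun x y => ∏ j, pauli (s j) (x j) (y j)

/-- Fourier coefficient `T̂(s) = tr(σ_s* T)`. -/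
def fc (T : QM n) (s : Fin n → Fin 4) : ℂ := qtr ((sigma s)ᴴ * T)

/-- Support of a multi-index. -/
def supp (s : Fin n → Fin 4) : Finset (Fin n) := Finset.univ.filter fun j => s j ≠ 0

/-- The `k`-th partial derivative, via the Fourier expansion. -/
def djF (k : Fin n) (T : QM n) : QM n :=
  ∑ s ∈ Finset.univ.filter (fun s : Fin n → Fin 4 => s k ≠ 0), fc T s • sigma s

/-- Conditional expectation onto the subalgebra `M_J`. -/
def condExp (J : Finset (Fin n)) (T : QM n) : QM n :=
  ∑ s ∈ Finset.univ.filter (fun s : Fin n → Fin 4 => supp s ⊆ J), fc T s • sigma s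

/-- The restriction operator `R_j^J(T) = 𝓔_{M_{J^c ∪ {j}}}(d_j(T))`. -/
def RR (J : Finset (Fin n)) (j : Fin n) (T : QM n) : QM n :=
  condExp (Jᶜ ∪ {j}) (djF j T)

/-- The operator `δ^𝓛`. -/
def deltaL (δ : ℝ) (T : QM n) : QM n :=
  ∑ s : Fin n → Fin 4, (((δ : ℂ) ^ (supp s).card) * fc T s) • sigma s

/-- The quantum Ornstein–Uhlenbeck semigroup `e^{-t𝓛}`. -/
def heat (t : ℝ) (T : QM n) : QM n :=
  ∑ s : Fin n → Fin 4, ((Real.exp (-t * (supp s).card) : ℂ) * fc T s) • sigma s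

/-- `H_d(T) = (1-1/(2d))^𝓛(T) - (1-1/d)^𝓛(T)`. -/
def Hd (d : ℕ) (T : QM n) : QM n :=
  deltaL (1 - 1 / (2 * (d : ℝ))) T - deltaL (1 - 1 / (d : ℝ)) T

/-- Probability of a subset `J` when each coordinate is included with probability `δ`. -/
def mu (δ : ℝ) (J : Finset (Fin n)) : ℝ := δ ^ J.card * (1 - δ) ^ (n - J.card)

/-- Total `L₂`-influence via Fourier coefficients. -/
def InfF (T : QM n) : ℝ := ∑ s : Fin n → Fin 4, ((supp s).card : ℝ) * ‖fc T s‖ ^ 2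

/-- Spectral weight `W_{≈d}(T)`. -/
def Wapprox (T : QM n) (d : ℕ) : ℝ :=
  ∑ s ∈ Finset.univ.filter
      (fun s : Fin n → Fin 4 => d ≤ (supp s).card ∧ (supp s).card < 2 * d),
    ‖fc T s‖ ^ 2

/-- Conditional expectation onto the algebra with identity in slot `j`
(`id ⊗ ⋯ ⊗ tr(·)1₂ ⊗ ⋯ ⊗ id`). -/
def slotExp (j : Fin n) (T : QM n) : QM n :=
  Matrix.of fun x y =>
    if x j = y j then (∑ b : Fin 2, T (Function.update x j b) (Function.update y j b)) / 2
    else 0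

/-- The `j`-th partial derivative `d_j = id - (id ⊗ ⋯ ⊗ tr(·)1₂ ⊗ ⋯ ⊗ id)`. -/
def dj (j : Fin n) (T : QM n) : QM n := T - slotExp j T

end QM

private lemma log_le_div_e {y : ℝ} (hy : 0 < y) : Real.log y ≤ y / Real.exp 1 := by
  have h := Real.log_le_sub_one_of_pos (show 0 < y / Real.exp 1 by positivity)
  rw [Real.log_div (ne_of_gt hy) (by positivity), Real.log_exp] at h
  linarith

private lemma pow_neg_log {a t : ℝ} (ha : 0 < a) (ht : 0 < t) :
    t ^ a * (-Real.log t) ≤ 1 / (a * Real.exp 1) := by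
  have h1 : Real.log (t ^ (-a)) = -a * Real.log t := Real.log_rpow ht _
  have h2 := log_le_div_e (Real.rpow_pos_of_pos ht (-a))
  rw [h1] at h2
  have h3 : t ^ a * t ^ (-a) = 1 := by
    rw [← Real.rpow_add ht]; simp
  have hta : 0 < t ^ a := Real.rpow_pos_of_pos ht a
  have he : 0 < Real.exp 1 := Real.exp_pos 1
  rw [le_div_iff₀ (by positivity)]
  have h4 := mul_le_mul_of_nonneg_left h2 (le_of_lt hta)
  calc t ^ a * (-Real.log t) * (a * Real.exp 1)
      = (t ^ a * (-a * Real.log t)) * Real.exp 1 := by ring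
    _ ≤ (t ^ a * (t ^ (-a) / Real.exp 1)) * Real.exp 1 := by
        exact mul_le_mul_of_nonneg_right h4 he.le
    _ = t ^ a * t ^ (-a) := by field_simp
    _ = 1 := h3

private lemma scalar_key {p t : ℝ} (hp1 : 1 ≤ p) (hp2 : p < 2) (ht0 : 0 ≤ t) (ht1 : t ≤ 1) :
    (t * Real.log (t ^ 2)) ^ 2 ≤ (4 / ((2 - p) * Real.exp 1)) ^ 2 * t ^ p := by
  have hp0 : 0 < p := by linarith
  rcases eq_or_lt_of_le ht0 with h | h
  · rw [← h, Real.zero_rpow (ne_of_gt hp0)]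
    norm_num
  · set a : ℝ := (2 - p) / 2 with ha_def
    have ha : 0 < a := by rw [ha_def]; linarith
    have hk := pow_neg_log ha h
    have hnn : 0 ≤ t ^ a * (-Real.log t) := by
      have : Real.log t ≤ 0 := Real.log_nonpos ht0 ht1
      have := Real.rpow_pos_of_pos h a
      nlinarith
    have hsq : (t ^ a * (-Real.log t)) ^ 2 ≤ (1 / (a * Real.exp 1)) ^ 2 :=
      pow_le_pow_left₀ hnn hk 2
    have ht2 : (t ^ a) ^ 2 * t ^ p = t ^ 2 := by
      rw [sq, ← Real.rpow_add h, ← Real.rpow_add h,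
        show a + a + p = ((2 : ℕ) : ℝ) by rw [ha_def]; push_cast; ring,
        Real.rpow_natCast]
    have hK : (4 / ((2 - p) * Real.exp 1)) ^ 2 = 4 * (1 / (a * Real.exp 1)) ^ 2 := by
      have h2p : (2 : ℝ) - p ≠ 0 := by linarith
      have he : Real.exp 1 ≠ 0 := (Real.exp_pos 1).ne'
      rw [ha_def]; field_simp; ring
    have hlg : Real.log (t ^ 2) = 2 * Real.log t := by
      rw [Real.log_pow]; norm_num
    have htp : 0 ≤ t ^ p := Real.rpow_nonneg ht0 p
    rw [hK, hlg]
    have h5 := mul_le_mul_of_nonneg_right hsq htp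
    have h6 : t ^ 2 * Real.log t ^ 2 ≤ (1 / (a * Real.exp 1)) ^ 2 * t ^ p := by
      calc t ^ 2 * Real.log t ^ 2 = (t ^ a * -Real.log t) ^ 2 * t ^ p := by
            rw [← ht2]; ring
        _ ≤ (1 / (a * Real.exp 1)) ^ 2 * t ^ p := h5
    nlinarith [h6]

/-- For a self-adjoint `T ∈ M_{2^n}` with `|T| ≤ 1` and `1 ≤ p < 2`,
`tr[-|T|² log(|T|²)] ≤ K_p ‖T‖₂ ‖T‖_p^{p/2}` where `K_p = 4/((2-p)e)`.
The left side is expressed spectrally via the singular values of `T`. -/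
theorem entropy_bound {n : ℕ} (p : ℝ) (hp1 : 1 ≤ p) (hp2 : p < 2) (T : QM n)
    (hsa : Tᴴ = T) (hcontr : ∀ i, QM.sv T i ≤ 1) :
    (∑ i, -(QM.sv T i ^ 2 * Real.log (QM.sv T i ^ 2))) / 2 ^ n ≤
      (4 / ((2 - p) * Real.exp 1)) * QM.snorm 2 T * QM.snorm p T ^ (p / 2) := by
  have hp0 : 0 < p := by linarith
  set s := QM.sv T with hs
  have hs0 : ∀ i, 0 ≤ s i := fun i => Real.sqrt_nonneg _
  set N : ℝ := 2 ^ n with hN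
  have hNpos : (0:ℝ) < N := by positivity
  set Kp : ℝ := 4 / ((2 - p) * Real.exp 1) with hKp
  have hKpos : 0 < Kp := by
    have h2p : (0:ℝ) < 2 - p := by linarith
    have := Real.exp_pos 1
    rw [hKp]; positivity
  set A : ℝ := ∑ i, s i ^ 2 with hA
  set B : ℝ := ∑ i : Fin n → Fin 2, s i ^ p with hB
  have hA0 : 0 ≤ A := Finset.sum_nonneg fun i _ => sq_nonneg _
  have hB0 : 0 ≤ B := Finset.sum_nonneg fun i _ => Real.rpow_nonneg (hs0 i) p
  set L : ℝ := ∑ i, -(s i ^ 2 * Real.log (s i ^ 2)) with hL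
  have hL0 : 0 ≤ L := by
    apply Finset.sum_nonneg
    intro i _
    have hlog : Real.log (s i ^ 2) ≤ 0 :=
      Real.log_nonpos (sq_nonneg _) (by nlinarith [hs0 i, hcontr i])
    nlinarith [sq_nonneg (s i)]
  -- Cauchy–Schwarz + scalar bound
  have hmain : L ≤ Kp * Real.sqrt A * Real.sqrt B := by
    have h1 : (∑ i, s i * (-(s i * Real.log (s i ^ 2)))) ^ 2
        ≤ (∑ i, s i ^ 2) * (∑ i, (-(s i * Real.log (s i ^ 2))) ^ 2) :=
      Finset.sum_mul_sq_le_sq_mul_sq _ _ _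
    have hLe : L = ∑ i, s i * (-(s i * Real.log (s i ^ 2))) := by
      rw [hL]; apply Finset.sum_congr rfl; intro i _; ring
    have h2 : ∑ i, (-(s i * Real.log (s i ^ 2))) ^ 2 ≤ Kp ^ 2 * B := by
      rw [hB, Finset.mul_sum]
      apply Finset.sum_le_sum
      intro i _
      simpa [neg_sq] using scalar_key hp1 hp2 (hs0 i) (hcontr i)
    have h3 : L ^ 2 ≤ A * (Kp ^ 2 * B) := by
      rw [hLe]
      calc (∑ i, s i * (-(s i * Real.log (s i ^ 2)))) ^ 2
          ≤ A * (∑ i, (-(s i * Real.log (s i ^ 2))) ^ 2) := h1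
        _ ≤ A * (Kp ^ 2 * B) := by
            exact mul_le_mul_of_nonneg_left h2 hA0
    have h4 : L ≤ Real.sqrt (A * (Kp ^ 2 * B)) :=
      (Real.le_sqrt hL0 (by positivity)).mpr h3
    calc L ≤ Real.sqrt (A * (Kp ^ 2 * B)) := h4
      _ = Kp * Real.sqrt A * Real.sqrt B := by
          rw [Real.sqrt_mul hA0, Real.sqrt_mul (by positivity), Real.sqrt_sq hKpos.le]
          ring
  -- identify the norms
  have hs2 : QM.snorm 2 T = Real.sqrt (A / N) := by
    rw [QM.snorm, Real.sqrt_eq_rpow]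
    congr 1
    rw [hA]
    congr 1
    apply Finset.sum_congr rfl
    intro i _
    rw [show (2:ℝ) = ((2:ℕ):ℝ) by norm_num, Real.rpow_natCast]
  have hsp : QM.snorm p T ^ (p / 2) = Real.sqrt (B / N) := by
    rw [QM.snorm, Real.sqrt_eq_rpow, ← Real.rpow_mul (by positivity),
      show 1 / p * (p / 2) = 1 / 2 by field_simp]
  rw [hs2, hsp, Real.sqrt_div hA0, Real.sqrt_div hB0]
  have hsN : Real.sqrt N * Real.sqrt N = N := Real.mul_self_sqrt hNpos.le
  have hsNpos : 0 < Real.sqrt N := Real.sqrt_pos.mpr hNpos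
  rw [div_le_iff₀ hNpos]
  calc L ≤ Kp * Real.sqrt A * Real.sqrt B := hmain
    _ = Kp * (Real.sqrt A / Real.sqrt N) * (Real.sqrt B / Real.sqrt N) * N := by
        field_simp
        rw [sq, hsN]
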